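/- Let G be a finite connected simple graph that is outer 1-planar and not chordal (i.e., G contains an induced cycle of length at least four). Then the cop number of G is at least 2; that is, a single cop cannot catch the robber on G. -/

import Mathlib

/-- A (memoryless, full-information) strategy for `k` cops on the graph `G`:
initial positions, and a move function giving the cops' next positions from the
current cop positions and robber position; each cop stays put or moves along an edge. -/
structure CopStrategy {V : Type*} (G : SimpleGraph V) (k : ℕ) where
  init : Fin k → V
  move : (Fin k → V) → V → (Fin k → V)
  valid : ∀ c r i, move c r i = c i ∨ G.Adj (c i) (move c r i)

/-- A strategy for the robber: an initial vertex chosen after seeing the cops'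
initial positions, and a move function from the current positions; the robber
stays put or moves along an edge. -/
structure RobberStrategy {V : Type*} (G : SimpleGraph V) (k : ℕ) where
  init : (Fin k → V) → V
  move : (Fin k → V) → V → V
  valid : ∀ c r, move c r = r ∨ G.Adj r (move c r)

/-- The play determined by a cop strategy and a robber strategy: at time `t`,
`(gamePlay CS RS t).1` are the cop positions and `(gamePlay CS RS t).2` is the
robber position, after both sides have moved in round `t` (cops move first). -/
def gamePlay {V : Type*} {G : SimpleGraph V} {k : ℕ} (CS : CopStrategy G k)
    (RS : RobberStrategy G k) : ℕ → (Fin k → V) × V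
  | 0 => (CS.init, RS.init CS.init)
  | t + 1 =>
      let s := gamePlay CS RS t
      let c' := CS.move s.1 s.2
      (c', RS.move c' s.2)

/-- A cop strategy is winning if against every robber strategy, at some moment some cop
occupies the robber's vertex (either right after the cops' move, while the robber is
still on its previous vertex, or after the robber's move). -/
def CopStrategy.Winning {V : Type*} {G : SimpleGraph V} {k : ℕ}
    (CS : CopStrategy G k) : Prop :=
  ∀ RS : RobberStrategy G k, ∃ t : ℕ,
    (∃ i, (gamePlay CS RS t).1 i = (gamePlay CS RS t).2) ∨
    (∃ i, CS.move (gamePlay CS RS t).1 (gamePlay CS RS t).2 i = (gamePlay CS RS t).2)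

/-- The cop number of `G`: the least `k` such that `k` cops have a winning strategy. -/
noncomputable def copNumber {V : Type*} (G : SimpleGraph V) : ℕ :=
  sInf {k | ∃ CS : CopStrategy G k, CS.Winning}

/-- The set of vertices of `ZMod n` strictly between `a` and `b`, traversing the circle
from `a` to `b` in the increasing direction of the cyclic order. -/
def arcBetween {n : ℕ} (a b : ZMod n) : Set (ZMod n) :=
  {x | 0 < (x - a).val ∧ (x - a).val < (b - a).val}

/-- Edges `{a,b}` and `{c,d}` with four distinct endpoints cross if exactly one of
`c`, `d` lies strictly between `a` and `b` on one of the two arcs. -/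
def EdgesCross {n : ℕ} (a b c d : ZMod n) : Prop :=
  a ≠ b ∧ a ≠ c ∧ a ≠ d ∧ b ≠ c ∧ b ≠ d ∧ c ≠ d ∧
  (Xor' (c ∈ arcBetween a b) (d ∈ arcBetween a b) ∨
   Xor' (c ∈ arcBetween b a) (d ∈ arcBetween b a))

/-- Crossing of (unordered) edges, as elements of `Sym2 (ZMod n)`. -/
def Sym2Cross {n : ℕ} (e f : Sym2 (ZMod n)) : Prop :=
  ∃ a b c d : ZMod n, e = s(a, b) ∧ f = s(c, d) ∧ EdgesCross a b c d

/-- The natural cyclic ordering of `ZMod n` is an outer `k`-planar drawing of `G`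
if every edge of `G` crosses at most `k` other edges of `G`. -/
def OuterKPlanarDrawing {n : ℕ} (G : SimpleGraph (ZMod n)) (k : ℕ) : Prop :=
  ∀ e ∈ G.edgeSet, {e' | e' ∈ G.edgeSet ∧ Sym2Cross e e'}.ncard ≤ k

/-- A finite simple graph is outer `k`-planar if there is a bijection of its vertex set
with `ZMod n` (where `n` is the number of vertices) under which every edge crosses
at most `k` other edges. -/
def OuterKPlanar {V : Type*} [Fintype V] (G : SimpleGraph V) (k : ℕ) : Prop :=
  ∃ f : V ≃ ZMod (Fintype.card V),
    OuterKPlanarDrawing (G.map f.toEmbedding) k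

/-- A graph is chordal if it contains no induced cycle of length at least four. -/
def IsChordal {V : Type*} (G : SimpleGraph V) : Prop :=
  ∀ (U : Set V) (m : ℕ), 4 ≤ m → IsEmpty (G.induce U ≃g SimpleGraph.cycleGraph m)

set_option linter.unusedSectionVars false
set_option linter.unusedVariables false
set_option maxHeartbeats 1000000

section Cross
variable {n : ℕ} [NeZero n]

lemma zmod_sub_val_of_lt {A B : ℕ} (hB : B < n) (h : A < B) :
    (((B:ZMod n)) - ((A:ZMod n))).val = B - A := by
  have h2 : ((B:ZMod n)) - ((A:ZMod n)) = ((B - A : ℕ) : ZMod n) := by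
    rw [Nat.cast_sub (le_of_lt h)]
  rw [h2, ZMod.val_cast_of_lt (by omega)]

lemma zmod_sub_val_of_gt {A B : ℕ} (hA : A < n) (h : B < A) :
    (((B:ZMod n)) - ((A:ZMod n))).val = n - (A - B) := by
  have h1 : ((B:ZMod n)) - ((A:ZMod n)) = ((n - (A - B) : ℕ) : ZMod n) := by
    have hle : A - B ≤ n := by omega
    rw [Nat.cast_sub hle, ZMod.natCast_self, Nat.cast_sub h.le]
    ring
  rw [h1, ZMod.val_cast_of_lt (by omega)]

/-- core: positions A < C < B, D outside (A,B), all < n: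
`c` is in the arc from `a` to `b`, `d` is not. -/
lemma cross_core {A B C D : ℕ} (hB : B < n) (hC : C < n) (hD : D < n)
    (h1 : A < C) (h2 : C < B) (h3 : D < A ∨ B < D) :
    ((C:ZMod n) ∈ arcBetween (A : ZMod n) (B:ZMod n)) ∧
    ((D:ZMod n) ∉ arcBetween (A : ZMod n) (B:ZMod n)) := by
  have hA : A < n := lt_trans h1 hC
  have hab : ((B:ZMod n) - (A:ZMod n)).val = B - A := zmod_sub_val_of_lt hB (lt_trans h1 h2)
  constructor
  · exact ⟨by rw [zmod_sub_val_of_lt hC h1]; omega,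
      by rw [zmod_sub_val_of_lt hC h1, hab]; omega⟩
  · intro hmem
    obtain ⟨hp1, hp2⟩ := hmem
    rw [hab] at hp2
    rcases h3 with h | h
    · rw [zmod_sub_val_of_gt hA h] at hp2; omega
    · rw [zmod_sub_val_of_lt hD (by omega)] at hp2; omega

end Cross

section PosCross
variable {V : Type*} {n : ℕ} [NeZero n] (f : V ≃ ZMod n) (v : V)

/-- position of `x` relative to hub `v` in the circular drawing -/
def posf (x : V) : ℕ := (f x - f v).val

lemma posf_self : posf f v v = 0 := by simp [posf]

lemma posf_lt (x : V) : posf f v x < n := ZMod.val_lt _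

lemma posf_injective : Function.Injective (posf f v) := by
  intro x y h
  have h2 : f x - f v = f y - f v := ZMod.val_injective n h
  exact f.injective (by linear_combination h2)

lemma sub_posf (x y : V) :
    f x - f y = ((posf f v x : ℕ) : ZMod n) - ((posf f v y : ℕ) : ZMod n) := by
  unfold posf
  rw [ZMod.natCast_rightInverse _, ZMod.natCast_rightInverse _]
  ring

lemma arc_posf (a b c : V) :
    f c ∈ arcBetween (f a) (f b) ↔
      ((posf f v c : ℕ) : ZMod n) ∈ arcBetween ((posf f v a : ℕ) : ZMod n)
        ((posf f v b : ℕ) : ZMod n) := by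
  unfold arcBetween
  simp only [Set.mem_setOf_eq]
  rw [sub_posf f v c a, sub_posf f v b a]

/-- `c` strictly between `a` and `b` in position (in one of the two linear senses). -/
def PBtw (a b c : V) : Prop :=
  (posf f v a < posf f v c ∧ posf f v c < posf f v b) ∨
  (posf f v b < posf f v c ∧ posf f v c < posf f v a)

lemma edgesCross_of_posf {a b c d : V}
    (hab : a ≠ b) (hac : a ≠ c) (had : a ≠ d) (hbc : b ≠ c) (hbd : b ≠ d) (hcd : c ≠ d)
    (hc : PBtw f v a b c) (hd : ¬ PBtw f v a b d) :
    EdgesCross (f a) (f b) (f c) (f d) := by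
  have pinj : ∀ x y : V, x ≠ y → posf f v x ≠ posf f v y := by
    intro x y hxy h; exact hxy (posf_injective f v h)
  refine ⟨fun h => hab (f.injective h), fun h => hac (f.injective h),
    fun h => had (f.injective h), fun h => hbc (f.injective h),
    fun h => hbd (f.injective h), fun h => hcd (f.injective h), ?_⟩
  unfold PBtw at hc hd
  rcases lt_or_gt_of_ne (pinj a b hab) with hABlt | hABgt
  · left
    have hc' : posf f v a < posf f v c ∧ posf f v c < posf f v b := by
      rcases hc with h | h
      · exact h
      · exact absurd (lt_trans (lt_trans h.1 h.2) hABlt) (lt_irrefl _)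
    have hd' : posf f v d < posf f v a ∨ posf f v b < posf f v d := by
      rcases lt_trichotomy (posf f v d) (posf f v a) with h | h | h
      · exact Or.inl h
      · exact ((had (posf_injective f v h).symm)).elim
      · rcases lt_trichotomy (posf f v d) (posf f v b) with h2 | h2 | h2
        · exact (hd (Or.inl ⟨h, h2⟩)).elim
        · exact ((hbd (posf_injective f v h2).symm)).elim
        · exact Or.inr h2
    obtain ⟨hcin, hdout⟩ := cross_core (posf_lt f v b) (posf_lt f v c) (posf_lt f v d)
      hc'.1 hc'.2 hd'
    rw [arc_posf f v a b c, arc_posf f v a b d]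
    exact Or.inl ⟨hcin, hdout⟩
  · right
    have hc' : posf f v b < posf f v c ∧ posf f v c < posf f v a := by
      rcases hc with h | h
      · exact absurd (lt_trans (lt_trans h.1 h.2) hABgt) (lt_irrefl _)
      · exact h
    have hd' : posf f v d < posf f v b ∨ posf f v a < posf f v d := by
      rcases lt_trichotomy (posf f v d) (posf f v b) with h | h | h
      · exact Or.inl h
      · exact ((hbd (posf_injective f v h).symm)).elim
      · rcases lt_trichotomy (posf f v d) (posf f v a) with h2 | h2 | h2
        · exact (hd (Or.inr ⟨h, h2⟩)).elim
        · exact ((had (posf_injective f v h2).symm)).elim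
        · exact Or.inr h2
    obtain ⟨hcin, hdout⟩ := cross_core (posf_lt f v a) (posf_lt f v c) (posf_lt f v d)
      hc'.1 hc'.2 hd'
    rw [arc_posf f v b a c, arc_posf f v b a d]
    exact Or.inl ⟨hcin, hdout⟩

end PosCross

section TwoCross
variable {V : Type*} {n : ℕ} [NeZero n] {G : SimpleGraph V} {f : V ≃ ZMod n}

lemma sym2_ne_fst {a b c d : V} (h1 : a ≠ c) (h2 : a ≠ d) :
    s(f a, f b) ≠ s(f c, f d) := by
  intro h
  rcases Sym2.eq_iff.1 h with ⟨h3, _⟩ | ⟨h3, _⟩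
  · exact h1 (f.injective h3)
  · exact h2 (f.injective h3)

lemma sym2_ne_snd {a b c d : V} (h1 : b ≠ c) (h2 : b ≠ d) :
    s(f a, f b) ≠ s(f c, f d) := by
  intro h
  rcases Sym2.eq_iff.1 h with ⟨_, h3⟩ | ⟨_, h3⟩
  · exact h2 (f.injective h3)
  · exact h1 (f.injective h3)

lemma mem_mapEdgeSet {x y : V} (h : G.Adj x y) :
    s(f x, f y) ∈ (G.map f.toEmbedding).edgeSet := by
  rw [SimpleGraph.mem_edgeSet]
  exact ⟨fun hxy => h.ne (f.injective hxy), x, y, h, rfl, rfl⟩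

lemma two_cross (hdr : OuterKPlanarDrawing (G.map f.toEmbedding) 1)
    {x1 x2 y1 y2 z1 z2 : V} (he : G.Adj x1 x2) (h1 : G.Adj y1 y2) (h2 : G.Adj z1 z2)
    (hne : s(f y1, f y2) ≠ s(f z1, f z2))
    (hc1 : EdgesCross (f x1) (f x2) (f y1) (f y2))
    (hc2 : EdgesCross (f x1) (f x2) (f z1) (f z2)) : False := by
  have hb := hdr s(f x1, f x2) (mem_mapEdgeSet he)
  have hy : s(f y1, f y2) ∈ {e' | e' ∈ (G.map f.toEmbedding).edgeSet ∧
      Sym2Cross s(f x1, f x2) e'} :=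
    ⟨mem_mapEdgeSet h1, f x1, f x2, f y1, f y2, rfl, rfl, hc1⟩
  have hz : s(f z1, f z2) ∈ {e' | e' ∈ (G.map f.toEmbedding).edgeSet ∧
      Sym2Cross s(f x1, f x2) e'} :=
    ⟨mem_mapEdgeSet h2, f x1, f x2, f z1, f z2, rfl, rfl, hc2⟩
  have hsub : ({s(f y1, f y2), s(f z1, f z2)} : Set (Sym2 (ZMod n))) ⊆
      {e' | e' ∈ (G.map f.toEmbedding).edgeSet ∧ Sym2Cross s(f x1, f x2) e'} := by
    intro e he'
    rcases he' with rfl | rfl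
    · exact hy
    · exact hz
  have h2le : 2 ≤ {e' | e' ∈ (G.map f.toEmbedding).edgeSet ∧
      Sym2Cross s(f x1, f x2) e'}.ncard := by
    rw [← Set.ncard_pair hne]
    exact Set.ncard_le_ncard hsub (Set.toFinite _)
  omega

end TwoCross

section Hub
variable {V : Type*} {n : ℕ} [NeZero n] {G : SimpleGraph V} {f : V ≃ ZMod n}

lemma zmod_small_ne_zero {m : ℕ} [NeZero m] {a : ℕ} (ha : 0 < a) (ham : a < m) :
    ((a:ℕ) : ZMod m) ≠ 0 := by
  intro h
  have h2 := ZMod.val_cast_of_lt ham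
  rw [h, ZMod.val_zero] at h2
  omega

/-- Core of the hub lemma, after normalizing so that `w (j0+1)` has the
second-smallest position. -/
lemma gl_core (hdr : OuterKPlanarDrawing (G.map f.toEmbedding) 1)
    {m : ℕ} [NeZero m] (hm : 4 ≤ m) (w : ZMod m → V) (hinj : Function.Injective w)
    (hadj : ∀ j, G.Adj (w j) (w (j+1))) (z : V) (hz : ∀ j, z ≠ w j)
    (hzadj : ∀ j, G.Adj z (w j)) (j0 : ZMod m)
    (hmin : ∀ j, j ≠ j0 → posf f z (w j0) < posf f z (w j))
    (h2nd : ∀ j, j ≠ j0 → j ≠ j0 + 1 → posf f z (w (j0+1)) < posf f z (w j)) :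
    False := by
  have h10 : (1 : ZMod m) ≠ 0 := by
    have := zmod_small_ne_zero (m := m) (a := 1) (by omega) (by omega); simpa using this
  have h20 : (2 : ZMod m) ≠ 0 := by
    have := zmod_small_ne_zero (m := m) (a := 2) (by omega) (by omega); simpa using this
  have h30 : (3 : ZMod m) ≠ 0 := by
    have := zmod_small_ne_zero (m := m) (a := 3) (by omega) (by omega); simpa using this
  have e1 : j0 + 1 ≠ j0 := fun h => h10 (by linear_combination h)
  have e2 : j0 - 1 ≠ j0 := fun h => h10 (by linear_combination -h)
  have e3 : j0 + 1 ≠ j0 - 1 := fun h => h20 (by linear_combination h)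
  have e4 : j0 + 2 ≠ j0 := fun h => h20 (by linear_combination h)
  have e5 : j0 + 2 ≠ j0 + 1 := fun h => h10 (by linear_combination h)
  have e6 : j0 + 2 ≠ j0 - 1 := fun h => h30 (by linear_combination h)
  have wne : ∀ {j k : ZMod m}, j ≠ k → w j ≠ w k := fun h hw => h (hinj hw)
  have hzw : ∀ j, w j ≠ z := fun j h => hz j h.symm
  have noBtwZ : ∀ a b : V, ¬ PBtw f z a b z := by
    intro a b hbt
    unfold PBtw at hbt
    rw [posf_self] at hbt
    omega
  have pinj : ∀ {j k : ZMod m}, j ≠ k → posf f z (w j) ≠ posf f z (w k) := by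
    intro j k hjk h
    exact wne hjk (posf_injective f z h)
  have hadj0m : G.Adj (w j0) (w (j0 - 1)) := by
    have h := hadj (j0 - 1)
    rw [sub_add_cancel] at h
    exact h.symm
  have hadj12 : G.Adj (w (j0+1)) (w (j0+2)) := by
    have h := hadj (j0 + 1)
    rw [show j0 + 1 + 1 = j0 + 2 by ring] at h
    exact h
  -- the spoke through w (j0+1) crosses the edge {w j0, w (j0-1)}
  have hcsp1 : EdgesCross (f (w j0)) (f (w (j0-1))) (f (w (j0+1))) (f z) :=
    edgesCross_of_posf f z (wne e2.symm) (wne e1.symm) (hzw j0)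
      (wne e3.symm) (hzw (j0-1)) (hzw (j0+1))
      (Or.inl ⟨hmin (j0+1) e1, h2nd (j0-1) e2 e3.symm⟩) (noBtwZ _ _)
  by_cases hlt : posf f z (w (j0+2)) < posf f z (w (j0-1))
  · -- then the spoke through w (j0+2) also crosses the edge {w j0, w (j0-1)}
    have hcsp2 : EdgesCross (f (w j0)) (f (w (j0-1))) (f (w (j0+2))) (f z) :=
      edgesCross_of_posf f z (wne e2.symm) (wne e4.symm) (hzw j0)
        (wne e6.symm) (hzw (j0-1)) (hzw (j0+2))
        (Or.inl ⟨hmin (j0+2) e4, hlt⟩) (noBtwZ _ _)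
    exact two_cross hdr hadj0m ((hzadj (j0+1)).symm) ((hzadj (j0+2)).symm)
      (sym2_ne_fst (wne e5.symm) (hzw (j0+1))) hcsp1 hcsp2
  · -- then the edge {w (j0+1), w (j0+2)} crosses the edge {w j0, w (j0-1)}
    have hgt : posf f z (w (j0-1)) < posf f z (w (j0+2)) :=
      lt_of_le_of_ne (le_of_not_gt hlt) (pinj e6).symm
    have hcB : EdgesCross (f (w j0)) (f (w (j0-1))) (f (w (j0+1))) (f (w (j0+2))) := by
      refine edgesCross_of_posf f z (wne e2.symm) (wne e1.symm) (wne e4.symm)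
        (wne e3.symm) (wne e6.symm) (wne (fun h => e5 h.symm))
        (Or.inl ⟨hmin (j0+1) e1, h2nd (j0-1) e2 e3.symm⟩) ?_
      intro hbt
      rcases hbt with ⟨h1', h2'⟩ | ⟨h1', h2'⟩
      · omega
      · exact absurd (lt_trans h2' (hmin (j0+2) e4)) (lt_irrefl _)
    exact two_cross hdr hadj0m ((hzadj (j0+1)).symm) hadj12
      (sym2_ne_snd (hz (j0+1)) (hz (j0+2))) hcsp1 hcB

/-- Hub lemma: in an outer 1-planar drawing, no vertex can be adjacent to every
vertex of a cycle of length at least 4 (vertex-disjoint from it). -/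
lemma no_full_dominator (hdr : OuterKPlanarDrawing (G.map f.toEmbedding) 1)
    {m : ℕ} (hm : 4 ≤ m) (w : ZMod m → V) (hinj : Function.Injective w)
    (hadj : ∀ j, G.Adj (w j) (w (j+1))) (z : V) (hz : ∀ j, z ≠ w j)
    (hzadj : ∀ j, G.Adj z (w j)) : False := by
  haveI : NeZero m := ⟨by omega⟩
  have h10 : (1 : ZMod m) ≠ 0 := by
    have := zmod_small_ne_zero (m := m) (a := 1) (by omega) (by omega); simpa using this
  have h20 : (2 : ZMod m) ≠ 0 := by
    have := zmod_small_ne_zero (m := m) (a := 2) (by omega) (by omega); simpa using this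
  have wne : ∀ {j k : ZMod m}, j ≠ k → w j ≠ w k := fun h hw => h (hinj hw)
  have hzw : ∀ j, w j ≠ z := fun j h => hz j h.symm
  have pinj : ∀ {j k : ZMod m}, j ≠ k → posf f z (w j) ≠ posf f z (w k) := by
    intro j k hjk h
    exact wne hjk (posf_injective f z h)
  obtain ⟨j0, -, hj0min⟩ := Finset.exists_min_image
    (Finset.univ : Finset (ZMod m)) (fun j => posf f z (w j)) ⟨0, Finset.mem_univ _⟩
  have hmin : ∀ j, j ≠ j0 → posf f z (w j0) < posf f z (w j) := fun j hj =>
    lt_of_le_of_ne (hj0min j (Finset.mem_univ _)) (pinj (Ne.symm hj))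
  have e1 : j0 + 1 ≠ j0 := fun h => h10 (by linear_combination h)
  have e2 : j0 - 1 ≠ j0 := fun h => h10 (by linear_combination -h)
  have e3 : j0 + 1 ≠ j0 - 1 := fun h => h20 (by linear_combination h)
  obtain ⟨j2, hj2mem, hj2min⟩ := Finset.exists_min_image
    (Finset.univ.erase j0) (fun j => posf f z (w j))
    ⟨j0 + 1, Finset.mem_erase.2 ⟨e1, Finset.mem_univ _⟩⟩
  have hj20 : j2 ≠ j0 := (Finset.mem_erase.1 hj2mem).1
  have hsec : ∀ j, j ≠ j0 → j ≠ j2 → posf f z (w j2) < posf f z (w j) := by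
    intro j hj0' hj2'
    exact lt_of_le_of_ne (hj2min j (Finset.mem_erase.2 ⟨hj0', Finset.mem_univ _⟩))
      (pinj (Ne.symm hj2'))
  -- j2 must be one of the neighbours of j0
  have hj2eq : j2 = j0 + 1 ∨ j2 = j0 - 1 := by
    by_contra hcon
    push_neg at hcon
    obtain ⟨hA, hB⟩ := hcon
    have hadj0m : G.Adj (w j0) (w (j0 - 1)) := by
      have h := hadj (j0 - 1)
      rw [sub_add_cancel] at h
      exact h.symm
    have hc1 : EdgesCross (f z) (f (w j2)) (f (w j0)) (f (w (j0+1))) := by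
      refine edgesCross_of_posf f z (hz j2) (hz j0) (hz (j0+1))
        (wne hj20) (wne hA) (wne (fun h => e1 h.symm)) (Or.inl ⟨?_, ?_⟩) ?_
      · rw [posf_self]
        rcases Nat.eq_zero_or_pos (posf f z (w j0)) with h | h
        · exact absurd (posf_injective f z (by rw [posf_self, h])) (hzw j0)
        · exact h
      · exact hmin j2 hj20
      · intro hbt
        rcases hbt with ⟨h1', h2'⟩ | ⟨h1', h2'⟩
        · exact absurd (lt_trans h2' (hsec (j0+1) e1 (Ne.symm hA))) (lt_irrefl _)
        · rw [posf_self] at h2'; omega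
    have hc2 : EdgesCross (f z) (f (w j2)) (f (w j0)) (f (w (j0-1))) := by
      refine edgesCross_of_posf f z (hz j2) (hz j0) (hz (j0-1))
        (wne hj20) (wne hB) (wne (fun h => e2 h.symm)) (Or.inl ⟨?_, ?_⟩) ?_
      · rw [posf_self]
        rcases Nat.eq_zero_or_pos (posf f z (w j0)) with h | h
        · exact absurd (posf_injective f z (by rw [posf_self, h])) (hzw j0)
        · exact h
      · exact hmin j2 hj20
      · intro hbt
        rcases hbt with ⟨h1', h2'⟩ | ⟨h1', h2'⟩
        · exact absurd (lt_trans h2' (hsec (j0-1) e2 (Ne.symm hB))) (lt_irrefl _)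
        · rw [posf_self] at h2'; omega
    exact two_cross hdr (hzadj j2) (hadj j0) hadj0m
      (sym2_ne_snd (wne e1) (wne e3)) hc1 hc2
  rcases hj2eq with h | h
  · exact gl_core hdr hm w hinj hadj z hz hzadj j0 hmin
      (fun j hj0' hj1' => h ▸ hsec j hj0' (h ▸ hj1'))
  · -- reverse the cycle
    have hrev : False := by
      apply gl_core hdr hm (fun j => w (j0 + j0 - j))
        (fun a b hab => by
          have := hinj hab
          have : a = b := by linear_combination -this
          exact this)
        (fun j => by
          show G.Adj (w (j0 + j0 - j)) (w (j0 + j0 - (j + 1)))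
          have h2 := hadj (j0 + j0 - j - 1)
          rw [show j0 + j0 - j - 1 + 1 = j0 + j0 - j by ring] at h2
          rw [show j0 + j0 - (j + 1) = j0 + j0 - j - 1 by ring]
          exact h2.symm)
        z (fun j => hz _) (fun j => hzadj _) j0
      · intro j hj
        show posf f z (w (j0 + j0 - j0)) < posf f z (w (j0 + j0 - j))
        rw [show j0 + j0 - j0 = j0 by ring]
        refine hmin _ (fun hcon => hj ?_)
        linear_combination -hcon
      · intro j hj0' hj1'
        show posf f z (w (j0 + j0 - (j0 + 1))) < posf f z (w (j0 + j0 - j))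
        rw [show j0 + j0 - (j0 + 1) = j0 - 1 by ring, ← h]
        refine hsec _ (fun hcon => hj0' ?_) (fun hcon => hj1' ?_)
        · linear_combination -hcon
        · rw [h] at hcon; linear_combination -hcon
    exact hrev

end Hub

section Cyc
variable {V : Type*} [DecidableEq V] (G : SimpleGraph V)

/-- There is an induced cycle of length at least 4 inside `S`. -/
def CycIn (S : Finset V) : Prop :=
  ∃ (m : ℕ) (w : ZMod m → V), 4 ≤ m ∧ Function.Injective w ∧ (∀ j, w j ∈ S) ∧
    (∀ j, G.Adj (w j) (w (j+1))) ∧ (∀ j k, G.Adj (w j) (w k) → k = j + 1 ∨ j = k + 1)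

variable {G}

lemma cycIn_erase {n : ℕ} [NeZero n] {f : V ≃ ZMod n}
    (hdr : OuterKPlanarDrawing (G.map f.toEmbedding) 1) {S : Finset V}
    (hC : CycIn G S) {u z : V} (hz : z ∈ S) (hzu : z ≠ u)
    (hdom : ∀ y ∈ S, (y = u ∨ G.Adj u y) → (y = z ∨ G.Adj z y)) :
    CycIn G (S.erase u) := by
  classical
  obtain ⟨m, w, hm, hinj, hmem, hadj, hind⟩ := hC
  haveI : NeZero m := ⟨by omega⟩
  by_cases hu : ∃ i, w i = u
  case neg =>
    exact ⟨m, w, hm, hinj,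
      fun j => Finset.mem_erase.2 ⟨fun h => hu ⟨j, h⟩, hmem j⟩, hadj, hind⟩
  obtain ⟨i, hi⟩ := hu
  have h10 : (1 : ZMod m) ≠ 0 := by
    have := zmod_small_ne_zero (m := m) (a := 1) (by omega) (by omega); simpa using this
  have h20 : (2 : ZMod m) ≠ 0 := by
    have := zmod_small_ne_zero (m := m) (a := 2) (by omega) (by omega); simpa using this
  have h30 : (3 : ZMod m) ≠ 0 := by
    have := zmod_small_ne_zero (m := m) (a := 3) (by omega) (by omega); simpa using this
  -- z is adjacent to w i, w (i+1), w (i-1)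
  have hKi : G.Adj z (w i) := by
    rcases hdom (w i) (hmem i) (Or.inl hi) with h | h
    · exact ((hzu (h.symm.trans hi)).elim)
    · exact h
  have hadjm : ∀ j : ZMod m, G.Adj (w (j - 1)) (w j) := by
    intro j
    have h := hadj (j - 1)
    rwa [sub_add_cancel] at h
  have hKip : G.Adj z (w (i+1)) := by
    rcases hdom (w (i+1)) (hmem (i+1)) (Or.inr (hi ▸ hadj i)) with h | h
    · exfalso
      rcases hdom (w (i-1)) (hmem (i-1)) (Or.inr (hi ▸ (hadjm i).symm)) with h2 | h2
      · have : i + 1 = i - 1 := hinj (h.trans h2.symm)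
        exact h20 (by linear_combination this)
      · rw [← h] at h2
        rcases hind (i+1) (i-1) h2 with h3 | h3
        · exact h30 (by linear_combination -h3)
        · exact h10 (by linear_combination h3)
    · exact h
  have hKim : G.Adj z (w (i-1)) := by
    rcases hdom (w (i-1)) (hmem (i-1)) (Or.inr (hi ▸ (hadjm i).symm)) with h | h
    · exfalso
      rw [← h] at hKip
      rcases hind (i-1) (i+1) hKip with h3 | h3
      · exact h10 (by linear_combination h3)
      · exact h30 (by linear_combination -h3)
    · exact h
  have hznotw : ∀ j, z ≠ w j := by
    intro j hzj
    rcases hind j i (hzj ▸ hKi) with h3 | h3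
    · -- i = j + 1, z = w (i - 1)
      have hj : j = i - 1 := by linear_combination -h3
      rw [hj] at hzj
      rw [hzj] at hKip
      rcases hind (i-1) (i+1) hKip with h4 | h4
      · exact h10 (by linear_combination h4)
      · exact h30 (by linear_combination -h4)
    · have hj : j = i + 1 := h3
      rw [hj] at hzj
      rw [hzj] at hKim
      rcases hind (i+1) (i-1) hKim with h4 | h4
      · exact h30 (by linear_combination -h4)
      · exact h10 (by linear_combination h4)
  by_cases hall : ∀ j, G.Adj z (w j)
  · exact (no_full_dominator hdr hm w hinj hadj z hznotw hall).elim
  push_neg at hall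
  obtain ⟨g, hg⟩ := hall
  -- walk from the gap to the two nearest neighbours of z on the cycle
  have hig : i ≠ g := fun h => hg (h ▸ hKi)
  have hex2 : ∃ t : ℕ, 0 < t ∧ G.Adj z (w (g + (t:ℕ))) := by
    refine ⟨(i - g).val, ?_, ?_⟩
    · have : i - g ≠ 0 := fun h => hig (by linear_combination h)
      have := (ZMod.val_eq_zero _).not.2 this
      omega
    · rw [ZMod.natCast_rightInverse (i - g), show g + (i - g) = i by ring]
      exact hKi
  have hex1 : ∃ t : ℕ, 0 < t ∧ G.Adj z (w (g - (t:ℕ))) := by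
    refine ⟨(g - i).val, ?_, ?_⟩
    · have : g - i ≠ 0 := fun h => hig (by linear_combination -h)
      have := (ZMod.val_eq_zero _).not.2 this
      omega
    · rw [ZMod.natCast_rightInverse (g - i), show g - (g - i) = i by ring]
      exact hKi
  set t2 := Nat.find hex2 with ht2def
  set t1 := Nat.find hex1 with ht1def
  obtain ⟨ht2pos, hK2⟩ := Nat.find_spec hex2
  obtain ⟨ht1pos, hK1⟩ := Nat.find_spec hex1
  set r : ℕ := (i - g).val with hrdef
  set r' : ℕ := (g - i).val with hr'def
  have hrpos : 0 < r := by
    have : i - g ≠ 0 := fun h => hig (by linear_combination h)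
    have := (ZMod.val_eq_zero (i - g)).not.2 this
    omega
  have hr'pos : 0 < r' := by
    have : g - i ≠ 0 := fun h => hig (by linear_combination -h)
    have := (ZMod.val_eq_zero (g - i)).not.2 this
    omega
  have hrr' : r + r' = m := by
    have hne : i - g ≠ 0 := fun h => hig (by linear_combination h)
    have h1 : g - i = -(i - g) := by ring
    have h2 : r' = m - r := by
      rw [hr'def, h1, ZMod.neg_val, if_neg hne]
    have : r < m := ZMod.val_lt _
    omega
  have hrm : r < m := ZMod.val_lt _
  have hr'm : r' < m := ZMod.val_lt _
  -- nat-cast injectivity below m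
  have hcastinj : ∀ a b : ℕ, a < m → b < m → ((a:ℕ) : ZMod m) = ((b:ℕ) : ZMod m) → a = b := by
    intro a b ha hb hab
    have h1 := ZMod.val_cast_of_lt ha
    have h2 := ZMod.val_cast_of_lt hb
    rw [hab] at h1
    omega
  have hr2 : i - 1 ≠ g := fun h => hg (h ▸ hKim)
  have hr2' : i + 1 ≠ g := fun h => hg (h ▸ hKip)
  have hcastr : ((r:ℕ) : ZMod m) = i - g := ZMod.natCast_rightInverse _
  have hcastr' : ((r':ℕ) : ZMod m) = g - i := ZMod.natCast_rightInverse _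
  have hrge2 : 2 ≤ r := by
    rcases Nat.lt_or_ge r 2 with h | h
    · exfalso
      have hr1 : r = 1 := by omega
      apply hr2
      have : ((1:ℕ) : ZMod m) = i - g := by rw [← hr1]; exact hcastr
      push_cast at this
      linear_combination -this
    · exact h
  have hr'ge2 : 2 ≤ r' := by
    rcases Nat.lt_or_ge r' 2 with h | h
    · exfalso
      have hr1 : r' = 1 := by omega
      apply hr2'
      have : ((1:ℕ) : ZMod m) = g - i := by rw [← hr1]; exact hcastr'
      push_cast at this
      linear_combination this
    · exact h
  have ht2r : t2 ≤ r - 1 := by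
    apply Nat.find_min'
    refine ⟨by omega, ?_⟩
    have hcast : ((r - 1 : ℕ) : ZMod m) = (i - g) - 1 := by
      rw [Nat.cast_sub (by omega)]
      rw [hcastr]
      norm_num
    rw [show g + ((r - 1 : ℕ) : ZMod m) = i - 1 by rw [hcast]; ring]
    exact hKim
  have ht1r' : t1 ≤ r' - 1 := by
    apply Nat.find_min'
    refine ⟨by omega, ?_⟩
    have hcast : ((r' - 1 : ℕ) : ZMod m) = (g - i) - 1 := by
      rw [Nat.cast_sub (by omega)]
      rw [hcastr']
      norm_num
    rw [show g - ((r' - 1 : ℕ) : ZMod m) = i + 1 by rw [hcast]; ring]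
    exact hKip
  set L := t1 + t2 with hLdef
  have hL2 : 2 ≤ L := by omega
  have hLm : L ≤ m - 2 := by omega
  set k1 : ZMod m := g - ((t1:ℕ) : ZMod m) with hk1def
  -- interior of the arc is non-adjacent to z
  have hmid : ∀ s : ℕ, 0 < s → s < L → ¬ G.Adj z (w (k1 + ((s:ℕ) : ZMod m))) := by
    intro s hs1 hs2 hAdj
    rcases Nat.lt_trichotomy s t1 with h | h | h
    · apply Nat.find_min hex1 (show t1 - s < t1 by omega)
      refine ⟨by omega, ?_⟩
      rw [show g - ((t1 - s : ℕ) : ZMod m) = k1 + ((s:ℕ) : ZMod m) by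
        rw [Nat.cast_sub h.le, hk1def]; ring]
      exact hAdj
    · apply hg
      rw [show k1 + ((s:ℕ) : ZMod m) = g by rw [hk1def, h]; ring] at hAdj
      exact hAdj
    · apply Nat.find_min hex2 (show s - t1 < t2 by omega)
      refine ⟨by omega, ?_⟩
      rw [show g + ((s - t1 : ℕ) : ZMod m) = k1 + ((s:ℕ) : ZMod m) by
        rw [Nat.cast_sub h.le, hk1def]; ring]
      exact hAdj
  have hk1K : G.Adj z (w k1) := hK1
  have hk2K : G.Adj z (w (k1 + ((L:ℕ) : ZMod m))) := by
    rw [show k1 + ((L:ℕ) : ZMod m) = g + ((t2:ℕ) : ZMod m) by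
      rw [hk1def, hLdef]; push_cast; ring]
    exact hK2
  -- the arc indices avoid i
  have hnotu : ∀ s : ℕ, s ≤ L → k1 + ((s:ℕ) : ZMod m) ≠ i := by
    intro s hsL heq
    by_cases hs0 : s = 0
    · subst hs0
      have h1 : ((t1:ℕ) : ZMod m) = ((r':ℕ) : ZMod m) := by
        rw [hcastr']
        push_cast at heq
        linear_combination -heq
      have := hcastinj t1 r' (by omega) hr'm h1
      omega
    by_cases hsL' : s = L
    · subst hsL'
      have h1 : ((t2:ℕ) : ZMod m) = ((r:ℕ) : ZMod m) := by
        rw [hcastr]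
        rw [hLdef] at heq
        push_cast at heq
        linear_combination heq
      have := hcastinj t2 r (by omega) hrm h1
      omega
    · exact hmid s (by omega) (by omega) (heq ▸ hKi)
  -- build the new cycle
  set m2 := L + 2 with hm2def
  haveI : NeZero m2 := ⟨by omega⟩
  have hm2cast : ((m2 : ℕ) : ZMod m2) = 0 := ZMod.natCast_self _
  have hval_succ : ∀ j : ZMod m2, j + 1 ≠ 0 → (j + 1).val = j.val + 1 := by
    intro j hj1
    have hjv : ((j.val : ℕ) : ZMod m2) = j := ZMod.natCast_rightInverse j
    have hlt : j.val + 1 < m2 := by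
      rcases Nat.lt_or_ge (j.val + 1) m2 with h | h
      · exact h
      · exfalso
        have hv : j.val < m2 := ZMod.val_lt j
        have hveq : j.val + 1 = m2 := by omega
        apply hj1
        calc j + 1 = ((j.val + 1 : ℕ) : ZMod m2) := by push_cast; rw [hjv]
          _ = 0 := by rw [hveq, hm2cast]
    have : j + 1 = ((j.val + 1 : ℕ) : ZMod m2) := by
      push_cast; rw [hjv]
    rw [this, ZMod.val_cast_of_lt hlt]
  have hval_last : ∀ j : ZMod m2, j ≠ 0 → j + 1 = 0 → j.val = L + 1 := by
    intro j hj0 hj1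
    have : j = ((L + 1 : ℕ) : ZMod m2) := by
      have h2 : ((L + 1 : ℕ) : ZMod m2) = ((m2:ℕ) : ZMod m2) - 1 := by
        push_cast [hm2def]; ring
      rw [h2, hm2cast]
      linear_combination hj1
    rw [this, ZMod.val_cast_of_lt (by omega)]
  have hvpos : ∀ j : ZMod m2, j ≠ 0 → 1 ≤ j.val ∧ j.val ≤ L + 1 := by
    intro j hj0
    have h1 : j.val ≠ 0 := fun h => hj0 ((ZMod.val_eq_zero j).1 h)
    have h2 : j.val < m2 := ZMod.val_lt j
    omega
  set w2 : ZMod m2 → V := fun j =>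
    if j = 0 then z else w (k1 + (((j.val - 1 : ℕ) : ℕ) : ZMod m)) with hw2def
  have hw2_0 : w2 0 = z := by rw [hw2def]; simp
  have hw2_ne : ∀ j : ZMod m2, j ≠ 0 → w2 j = w (k1 + (((j.val - 1 : ℕ) : ℕ) : ZMod m)) := by
    intro j hj
    rw [hw2def]
    simp [hj]
  -- arc-index injectivity
  have harcinj : ∀ s s' : ℕ, s ≤ L + 1 → s' ≤ L + 1 →
      k1 + ((s:ℕ) : ZMod m) = k1 + ((s':ℕ) : ZMod m) → s = s' := by
    intro s s' hs hs' h
    exact hcastinj s s' (by omega) (by omega) (by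
      have := add_left_cancel h
      exact this)
  refine ⟨m2, w2, by omega, ?_, ?_, ?_, ?_⟩
  · -- injective
    intro j k hjk
    by_cases hj0 : j = 0 <;> by_cases hk0 : k = 0
    · rw [hj0, hk0]
    · rw [hj0, hw2_0, hw2_ne k hk0] at hjk
      exact ((hznotw _) hjk).elim
    · rw [hk0, hw2_0, hw2_ne j hj0] at hjk
      exact ((hznotw _) hjk.symm).elim
    · rw [hw2_ne j hj0, hw2_ne k hk0] at hjk
      obtain ⟨hj1, hj2⟩ := hvpos j hj0
      obtain ⟨hk1', hk2'⟩ := hvpos k hk0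
      have := harcinj _ _ (by omega) (by omega) (hinj hjk)
      have hveq : j.val = k.val := by omega
      exact ZMod.val_injective _ hveq
  · -- membership in S.erase u
    intro j
    by_cases hj0 : j = 0
    · rw [hj0, hw2_0]
      exact Finset.mem_erase.2 ⟨hzu, hz⟩
    · rw [hw2_ne j hj0]
      refine Finset.mem_erase.2 ⟨?_, hmem _⟩
      intro h
      obtain ⟨hj1, hj2⟩ := hvpos j hj0
      exact hnotu (j.val - 1) (by omega) (by rw [← hi] at h; exact hinj h)
  · -- cycle adjacency
    intro j
    by_cases hj0 : j = 0
    · rw [hj0, hw2_0]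
      have h1ne : (0 : ZMod m2) + 1 ≠ 0 := by
        rw [zero_add]
        have := zmod_small_ne_zero (m := m2) (a := 1) (by omega) (by omega)
        simpa using this
      rw [zero_add]
      rw [hw2_ne 1 (by simpa using h1ne)]
      have hv1 : (1 : ZMod m2).val = 1 := by
        rw [ZMod.val_one_eq_one_mod, Nat.mod_eq_of_lt (by omega)]
      rw [hv1]
      simpa using hk1K
    · by_cases hj1 : j + 1 = 0
      · rw [hj1, hw2_0, hw2_ne j hj0]
        have hvl := hval_last j hj0 hj1
        rw [hvl]
        simpa using hk2K.symm
      · rw [hw2_ne j hj0, hw2_ne (j+1) hj1]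
        have hvs := hval_succ j hj1
        obtain ⟨hj1', hj2'⟩ := hvpos j hj0
        rw [hvs]
        have hidx : k1 + (((j.val + 1 - 1 : ℕ) : ℕ) : ZMod m) =
            (k1 + (((j.val - 1 : ℕ) : ℕ) : ZMod m)) + 1 := by
          have h1 : (j.val + 1 - 1 : ℕ) = (j.val - 1) + 1 := by omega
          rw [h1]
          push_cast
          ring
        rw [hidx]
        exact hadj _
  · -- inducedness
    intro j k hjk
    by_cases hj0 : j = 0 <;> by_cases hk0 : k = 0
    · rw [hj0, hk0, hw2_0] at hjk
      exact (G.irrefl hjk).elim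
    · -- j = 0 : z adjacent to an arc vertex
      rw [hj0, hw2_0, hw2_ne k hk0] at hjk
      obtain ⟨hk1', hk2'⟩ := hvpos k hk0
      have hcases : k.val - 1 = 0 ∨ k.val - 1 = L := by
        by_contra hcon
        push_neg at hcon
        exact hmid (k.val - 1) (by omega) (by omega) hjk
      have hkv : ((k.val : ℕ) : ZMod m2) = k := ZMod.natCast_rightInverse k
      rcases hcases with h | h
      · left
        rw [hj0, zero_add, ← hkv]
        have : k.val = 1 := by omega
        rw [this]
        push_cast
        ring
      · right
        rw [hj0]
        have : k.val = L + 1 := by omega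
        rw [← hkv, this]
        rw [show ((L + 1 : ℕ) : ZMod m2) + 1 = ((m2 : ℕ) : ZMod m2) by push_cast [hm2def]; ring]
        rw [hm2cast]
    · -- k = 0
      rw [hk0, hw2_0, hw2_ne j hj0] at hjk
      obtain ⟨hj1', hj2'⟩ := hvpos j hj0
      have hcases : j.val - 1 = 0 ∨ j.val - 1 = L := by
        by_contra hcon
        push_neg at hcon
        exact hmid (j.val - 1) (by omega) (by omega) hjk.symm
      have hjv : ((j.val : ℕ) : ZMod m2) = j := ZMod.natCast_rightInverse j
      rcases hcases with h | h
      · right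
        rw [hk0, zero_add, ← hjv]
        have : j.val = 1 := by omega
        rw [this]
        push_cast
        ring
      · left
        rw [hk0]
        have : j.val = L + 1 := by omega
        rw [← hjv, this]
        rw [show ((L + 1 : ℕ) : ZMod m2) + 1 = ((m2 : ℕ) : ZMod m2) by push_cast [hm2def]; ring]
        rw [hm2cast]
    · -- both nonzero
      rw [hw2_ne j hj0, hw2_ne k hk0] at hjk
      obtain ⟨hj1', hj2'⟩ := hvpos j hj0
      obtain ⟨hk1', hk2'⟩ := hvpos k hk0
      have hjv : ((j.val : ℕ) : ZMod m2) = j := ZMod.natCast_rightInverse j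
      have hkv : ((k.val : ℕ) : ZMod m2) = k := ZMod.natCast_rightInverse k
      rcases hind _ _ hjk with h | h
      · -- arc index of k = arc index of j + 1
        have h2 : k1 + (((k.val - 1 : ℕ) : ℕ) : ZMod m) =
            k1 + (((j.val - 1 + 1 : ℕ) : ℕ) : ZMod m) := by
          rw [h]
          push_cast
          ring
        have h3 := harcinj _ _ (by omega) (by omega) h2
        left
        rw [← hjv, ← hkv]
        have : k.val = j.val + 1 := by omega
        rw [this]
        push_cast
        ring
      · have h2 : k1 + (((j.val - 1 : ℕ) : ℕ) : ZMod m) =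
            k1 + (((k.val - 1 + 1 : ℕ) : ℕ) : ZMod m) := by
          rw [h]
          push_cast
          ring
        have h3 := harcinj _ _ (by omega) (by omega) h2
        right
        rw [← hjv, ← hkv]
        have : j.val = k.val + 1 := by omega
        rw [this]
        push_cast
        ring

end Cyc
section InitCycle
variable {V : Type*} [DecidableEq V] {G : SimpleGraph V}

lemma cycIn_univ_of_not_chordal [Fintype V] (hnc : ¬ IsChordal G) :
    CycIn G Finset.univ := by
  unfold IsChordal at hnc
  push_neg at hnc
  obtain ⟨U, m, hm, hne⟩ := hnc
  obtain ⟨e⟩ := hne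
  haveI : NeZero m := ⟨by omega⟩
  set toF : ZMod m → Fin m := fun j => ⟨j.val, ZMod.val_lt j⟩ with htoF
  set toZ : Fin m → ZMod m := fun a => ((a.val : ℕ) : ZMod m) with htoZ
  have htoZF : ∀ j, toZ (toF j) = j := fun j => ZMod.natCast_rightInverse j
  have hsub : ∀ a b : Fin m, toZ (a - b) = toZ a - toZ b := by
    intro a b
    rw [htoZ]
    simp only
    rw [Fin.sub_def]
    simp only
    rw [ZMod.natCast_mod, Nat.cast_add, Nat.cast_sub (le_of_lt b.isLt), ZMod.natCast_self]
    ring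
  have hone : ∀ x : Fin m, x.val = 1 ↔ toZ x = 1 := by
    intro x
    constructor
    · intro h
      rw [htoZ]
      simp only [h, Nat.cast_one]
    · intro h
      have h2 : ((x.val : ℕ) : ZMod m).val = ((1:ℕ) : ZMod m).val := by
        rw [show ((1:ℕ) : ZMod m) = 1 by push_cast; ring, ← h, htoZ]
      rw [ZMod.val_cast_of_lt x.isLt, ZMod.val_cast_of_lt (by omega)] at h2
      exact h2
  have hadjiff : ∀ a b : Fin m, (SimpleGraph.cycleGraph m).Adj a b ↔
      (toZ a = toZ b + 1 ∨ toZ b = toZ a + 1) := by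
    intro a b
    rw [SimpleGraph.cycleGraph_adj', hone, hone, hsub, hsub]
    constructor
    · rintro (h | h)
      · exact Or.inl (by linear_combination h)
      · exact Or.inr (by linear_combination h)
    · rintro (h | h)
      · exact Or.inl (by linear_combination h)
      · exact Or.inr (by linear_combination h)
  refine ⟨m, fun j => ((e.symm (toF j)) : U).val, hm, ?_, fun j => Finset.mem_univ _, ?_, ?_⟩
  · intro a b hab
    have h1 : e.symm (toF a) = e.symm (toF b) := Subtype.coe_injective hab
    have h2 : toF a = toF b := e.symm.injective h1
    have h3 : (toF a).val = (toF b).val := congrArg Fin.val h2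
    rw [htoF] at h3
    simp only at h3
    exact ZMod.val_injective _ h3
  · intro j
    have h2 : (SimpleGraph.cycleGraph m).Adj (toF j) (toF (j+1)) := by
      rw [hadjiff]
      exact Or.inr (by rw [htoZF, htoZF])
    have h3 := e.symm.map_adj_iff.2 h2
    exact h3
  · intro j k hadj
    have h3 : (G.induce U).Adj (e.symm (toF j)) (e.symm (toF k)) := hadj
    rw [e.symm.map_adj_iff, hadjiff, htoZF, htoZF] at h3
    exact h3.symm

end InitCycle

section Dismantle
variable {V : Type*} [DecidableEq V] {G : SimpleGraph V}

/-- Iterated removal of dominated vertices, keeping an induced cycle, reaching a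
corner-free set together with a retraction-like map. -/
lemma dismantle {n : ℕ} [NeZero n] {f : V ≃ ZMod n}
    (hdr : OuterKPlanarDrawing (G.map f.toEmbedding) 1) :
    ∀ (N : ℕ) (S : Finset V), S.card ≤ N → CycIn G S →
    ∃ (H : Finset V) (φ : V → V), H ⊆ S ∧ CycIn G H ∧ (∀ x ∈ S, φ x ∈ H) ∧
      (∀ h ∈ H, φ h = h) ∧
      (∀ x ∈ S, ∀ y ∈ S, G.Adj x y → φ x = φ y ∨ G.Adj (φ x) (φ y)) ∧
      (∀ u ∈ H, ∀ z ∈ H, u ≠ z →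
        ∃ r ∈ H, (r = u ∨ G.Adj u r) ∧ ¬(r = z ∨ G.Adj z r)) := by
  intro N
  induction N with
  | zero =>
    intro S hcard hcyc
    exfalso
    obtain ⟨m, w, hm, -, hmem, -, -⟩ := hcyc
    haveI : NeZero m := ⟨by omega⟩
    have := Finset.card_eq_zero.1 (Nat.le_zero.1 hcard)
    rw [this] at hmem
    exact absurd (hmem 0) (Finset.notMem_empty _)
  | succ N ih =>
    intro S hcard hcyc
    by_cases hcorner : ∃ u ∈ S, ∃ z ∈ S, z ≠ u ∧
        ∀ y ∈ S, (y = u ∨ G.Adj u y) → (y = z ∨ G.Adj z y)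
    · obtain ⟨u, hu, z, hzS, hzu, hdom⟩ := hcorner
      have hcyc' : CycIn G (S.erase u) := cycIn_erase hdr hcyc hzS hzu hdom
      have hcard' : (S.erase u).card ≤ N := by
        have := Finset.card_erase_of_mem hu
        omega
      obtain ⟨H, φ, hHS, hHcyc, hφH, hφid, hφhom, hcf⟩ := ih (S.erase u) hcard' hcyc'
      set σ : V → V := fun x => if x = u then z else x with hσ
      refine ⟨H, φ ∘ σ, hHS.trans (Finset.erase_subset _ _), hHcyc, ?_, ?_, ?_, hcf⟩
      · intro x hx
        by_cases hxu : x = u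
        · have : σ x = z := by rw [hσ]; simp [hxu]
          rw [Function.comp_apply, this]
          exact hφH z (Finset.mem_erase.2 ⟨hzu, hzS⟩)
        · have : σ x = x := by rw [hσ]; simp [hxu]
          rw [Function.comp_apply, this]
          exact hφH x (Finset.mem_erase.2 ⟨hxu, hx⟩)
      · intro h hh
        have hhu : h ≠ u := fun heq =>
          (Finset.mem_erase.1 (hHS hh)).1 heq
        have : σ h = h := by rw [hσ]; simp [hhu]
        rw [Function.comp_apply, this]
        exact hφid h hh
      · intro x hx y hy hxy
        have hmemσ : ∀ t ∈ S, σ t ∈ S.erase u := by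
          intro t ht
          by_cases htu : t = u
          · have : σ t = z := by rw [hσ]; simp [htu]
            rw [this]
            exact Finset.mem_erase.2 ⟨hzu, hzS⟩
          · have : σ t = t := by rw [hσ]; simp [htu]
            rw [this]
            exact Finset.mem_erase.2 ⟨htu, ht⟩
        have hσhom : σ x = σ y ∨ G.Adj (σ x) (σ y) := by
          by_cases hxu : x = u <;> by_cases hyu : y = u
          · exact absurd (hxu.trans hyu.symm) hxy.ne
          · have hx' : σ x = z := by rw [hσ]; simp [hxu]
            have hy' : σ y = y := by rw [hσ]; simp [hyu]
            rw [hx', hy']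
            have := hdom y hy (Or.inr (hxu ▸ hxy))
            rcases this with h | h
            · exact Or.inl h.symm
            · exact Or.inr h
          · have hx' : σ x = x := by rw [hσ]; simp [hxu]
            have hy' : σ y = z := by rw [hσ]; simp [hyu]
            rw [hx', hy']
            have := hdom x hx (Or.inr (hyu ▸ hxy.symm))
            rcases this with h | h
            · exact Or.inl h
            · exact Or.inr h.symm
          · have hx' : σ x = x := by rw [hσ]; simp [hxu]
            have hy' : σ y = y := by rw [hσ]; simp [hyu]
            rw [hx', hy']
            exact Or.inr hxy
        rcases hσhom with h | h
        · exact Or.inl (congrArg φ h)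
        · exact hφhom (σ x) (hmemσ x hx) (σ y) (hmemσ y hy) h
    · push_neg at hcorner
      refine ⟨S, id, le_refl _, hcyc, fun x hx => hx, fun h _ => rfl,
        fun x _ y _ hxy => Or.inr hxy, ?_⟩
      intro u hu z hz huz
      obtain ⟨y, hyS, hy1, hy2⟩ := hcorner u hu z hz (Ne.symm huz)
      refine ⟨y, hyS, hy1, ?_⟩
      rintro (h | h)
      · exact hy2.1 h
      · exact hy2.2 h

end Dismantle

section Game
variable {V : Type*} {G : SimpleGraph V}

lemma robber_wins (H : Finset V) (φ : V → V)
    (hφH : ∀ x, φ x ∈ H) (hφid : ∀ h ∈ H, φ h = h)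
    (hφhom : ∀ x y, G.Adj x y → φ x = φ y ∨ G.Adj (φ x) (φ y))
    (hcf : ∀ u ∈ H, ∀ z ∈ H, u ≠ z →
      ∃ r ∈ H, (r = u ∨ G.Adj u r) ∧ ¬(r = z ∨ G.Adj z r))
    (hH2 : ∃ a ∈ H, ∃ b ∈ H, a ≠ b)
    (CS : CopStrategy G 1) : ¬ CS.Winning := by
  classical
  set P : V → V → Prop := fun x r' => r' ∈ H ∧ r' ≠ φ x ∧ ¬ G.Adj (φ x) r' with hP
  have exists_safe : ∀ x : V, ∃ r, P x r := by
    intro x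
    obtain ⟨a, ha, b, hb, hab⟩ := hH2
    have hu : ∃ u ∈ H, u ≠ φ x := by
      by_cases h : a = φ x
      · exact ⟨b, hb, fun hbx => hab (h.trans hbx.symm)⟩
      · exact ⟨a, ha, h⟩
    obtain ⟨u, huH, huφ⟩ := hu
    obtain ⟨r, hr, h1, h2⟩ := hcf u huH (φ x) (hφH x) huφ
    exact ⟨r, hr, fun h => h2 (Or.inl h), fun h => h2 (Or.inr h)⟩
  have exists_move : ∀ (x r : V), r ∈ H → r ≠ φ x →
      ∃ r', (r' = r ∨ G.Adj r r') ∧ P x r' := by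
    intro x r hrH hrφ
    obtain ⟨r', hr'H, h1, h2⟩ := hcf r hrH (φ x) (hφH x) hrφ
    exact ⟨r', h1, hr'H, fun h => h2 (Or.inl h), fun h => h2 (Or.inr h)⟩
  set RS : RobberStrategy G 1 :=
    { init := fun c => (exists_safe (c 0)).choose
      move := fun c r =>
        if h : ∃ r', (r' = r ∨ G.Adj r r') ∧ P (c 0) r' then h.choose else r
      valid := by
        intro c r
        beta_reduce
        by_cases h : ∃ r', (r' = r ∨ G.Adj r r') ∧ P (c 0) r'
        · rw [dif_pos h]
          exact h.choose_spec.1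
        · rw [dif_neg h]
          exact Or.inl rfl } with hRS
  intro hwin
  -- from the invariant at time t, the robber stays safe from the cops' next position
  have hkey : ∀ t, P ((gamePlay CS RS t).1 0) (gamePlay CS RS t).2 →
      (gamePlay CS RS t).2 ≠
        φ ((CS.move (gamePlay CS RS t).1 (gamePlay CS RS t).2) 0) := by
    intro t hInv
    obtain ⟨hrH, hrne, hrnadj⟩ := hInv
    have hcv := CS.valid (gamePlay CS RS t).1 (gamePlay CS RS t).2 0
    rcases hcv with h | h
    · rw [h]; exact hrne
    · rcases hφhom _ _ h with h2 | h2
      · rw [← h2]; exact hrne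
      · intro heq
        rw [← heq] at h2
        exact hrnadj h2
  have hInv : ∀ t, P ((gamePlay CS RS t).1 0) (gamePlay CS RS t).2 := by
    intro t
    induction t with
    | zero =>
      have hspec := (exists_safe (CS.init 0)).choose_spec
      exact ⟨hspec.1, hspec.2.1, hspec.2.2⟩
    | succ t iht =>
      have hrne' := hkey t iht
      have hmove := exists_move ((CS.move (gamePlay CS RS t).1 (gamePlay CS RS t).2) 0)
        (gamePlay CS RS t).2 iht.1 hrne'
      have hg : gamePlay CS RS (t+1) =
          (CS.move (gamePlay CS RS t).1 (gamePlay CS RS t).2,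
           RS.move (CS.move (gamePlay CS RS t).1 (gamePlay CS RS t).2)
             (gamePlay CS RS t).2) := rfl
      rw [hg]
      have hmv : RS.move (CS.move (gamePlay CS RS t).1 (gamePlay CS RS t).2)
          (gamePlay CS RS t).2 = hmove.choose := dif_pos hmove
      rw [hmv]
      exact hmove.choose_spec.2
  obtain ⟨t, hcap⟩ := hwin RS
  obtain ⟨hrH, hrne, hrnadj⟩ := hInv t
  rcases hcap with ⟨i, hi⟩ | ⟨i, hi⟩
  · have hi0 : i = 0 := Subsingleton.elim _ _
    rw [hi0] at hi
    apply hrne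
    rw [← hi]
    exact (hφid _ (hi ▸ hrH)).symm
  · have hi0 : i = 0 := Subsingleton.elim _ _
    rw [hi0] at hi
    apply hkey t (hInv t)
    rw [hi]
    exact (hφid _ hrH).symm

end Game

/-- A finite connected outer 1-planar graph that is not chordal has cop number at
least two; that is, a single cop cannot catch the robber. -/
theorem outer_one_planar_not_chordal_copnumber_ge_two {V : Type*} [Fintype V]
    (G : SimpleGraph V) (hconn : G.Connected) (h1p : OuterKPlanar G 1)
    (hnc : ¬ IsChordal G) :
    2 ≤ copNumber G ∧ ¬ ∃ CS : CopStrategy G 1, CS.Winning := by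
  classical
  obtain ⟨f, hdr⟩ := h1p
  haveI : Nonempty V := hconn.nonempty
  haveI : NeZero (Fintype.card V) := ⟨Fintype.card_ne_zero⟩
  have hcyc : CycIn G Finset.univ := cycIn_univ_of_not_chordal hnc
  obtain ⟨H, φ, -, hHcyc, hφH', hφid, hφhom', hcf⟩ :=
    dismantle hdr (Fintype.card V) Finset.univ (by rw [Finset.card_univ]) hcyc
  have hφH : ∀ x, φ x ∈ H := fun x => hφH' x (Finset.mem_univ x)
  have hφhom : ∀ x y, G.Adj x y → φ x = φ y ∨ G.Adj (φ x) (φ y) := fun x y h =>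
    hφhom' x (Finset.mem_univ x) y (Finset.mem_univ y) h
  have hH2 : ∃ a ∈ H, ∃ b ∈ H, a ≠ b := by
    obtain ⟨m, w, hm, hinj, hmem, -, -⟩ := hHcyc
    haveI : NeZero m := ⟨by omega⟩
    refine ⟨w 0, hmem 0, w 1, hmem 1, fun h => ?_⟩
    have h01 : (0 : ZMod m) = 1 := hinj h
    have h1 : (1 : ZMod m) ≠ 0 := by
      have := zmod_small_ne_zero (m := m) (a := 1) (by omega) (by omega)
      simpa using this
    exact h1 h01.symm
  have hno1 : ¬ ∃ CS : CopStrategy G 1, CS.Winning := by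
    rintro ⟨CS, hwin⟩
    exact robber_wins H φ hφH hφid hφhom hcf hH2 CS hwin
  refine ⟨?_, hno1⟩
  -- all-cops strategy shows the defining set is nonempty
  have hmemS : Fintype.card V ∈ {k | ∃ CS : CopStrategy G k, CS.Winning} := by
    set CS0 : CopStrategy G (Fintype.card V) :=
      ⟨fun i => (Fintype.equivFin V).symm i, fun c _ => c,
        fun c r i => Or.inl rfl⟩ with hCS0
    refine ⟨CS0, ?_⟩
    intro RS
    refine ⟨0, Or.inl ⟨Fintype.equivFin V ((gamePlay CS0 RS 0).2), ?_⟩⟩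
    exact Equiv.symm_apply_apply _ _
  have hInf := Nat.sInf_mem (⟨_, hmemS⟩ :
    {k | ∃ CS : CopStrategy G k, CS.Winning}.Nonempty)
  have h0 : 0 ∉ {k | ∃ CS : CopStrategy G k, CS.Winning} := by
    rintro ⟨CS, hwin⟩
    obtain ⟨v0⟩ := ‹Nonempty V›
    obtain ⟨t, h | h⟩ := hwin ⟨fun _ => v0, fun _ r => r, fun _ _ => Or.inl rfl⟩
    · exact h.choose.elim0
    · exact h.choose.elim0
  show 2 ≤ sInf {k | ∃ CS : CopStrategy G k, CS.Winning}
  rcases Nat.lt_or_ge (sInf {k | ∃ CS : CopStrategy G k, CS.Winning}) 2 with h | h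
  · exfalso
    have h01 : sInf {k | ∃ CS : CopStrategy G k, CS.Winning} = 0 ∨
        sInf {k | ∃ CS : CopStrategy G k, CS.Winning} = 1 := by omega
    rcases h01 with h' | h'
    · rw [h'] at hInf
      exact h0 hInf
    · rw [h'] at hInf
      exact hno1 hInf
  · exact h
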